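/- Fix λ ≥ 0, γ > 0, a matrix X ∈ ℝ^{p×n}, a finite index set E with nonnegative weights ω_l and vectors c_l ∈ ℝ^n for l ∈ E, and positive constants ν₁,…,ν_p. Define f(U) := (1/2)‖X − U‖_F² + λ Σ_{l∈E} ω_l ‖U c_l‖₂ + γ Σ_{k=1}^p ν_k ‖a_k‖₂, where a_k is the k-th row of U ∈ ℝ^{p×n}. If ‖X_{k,·}‖₂ ≤ γ ν_k for every k = 1,…,p (where X_{k,·} is the k-th row of X), then U = 0 is a global minimizer of f, i.e., f(U) ≥ f(0) = (1/2)‖X‖_F² for all U ∈ ℝ^{p×n}. -/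

import Mathlib

/-- Euclidean norm of a vector in `ℝ^m`. -/
noncomputable def vecEnorm {m : ℕ} (x : Fin m → ℝ) : ℝ := Real.sqrt (∑ i, x i ^ 2)

/-- Frobenius norm of a `p × n` real matrix. -/
noncomputable def frob {p n : ℕ} (U : Fin p → Fin n → ℝ) : ℝ :=
  Real.sqrt (∑ i, ∑ j, U i j ^ 2)

/-- Matrix-vector product. -/
noncomputable def mulVecF {p n : ℕ} (U : Fin p → Fin n → ℝ) (c : Fin n → ℝ) : Fin p → ℝ :=
  fun i => ∑ j, U i j * c j

lemma enorm_nonneg' {m : ℕ} (x : Fin m → ℝ) : 0 ≤ vecEnorm x := Real.sqrt_nonneg _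

lemma cs {m : ℕ} (a b : Fin m → ℝ) : ∑ j, a j * b j ≤ vecEnorm a * vecEnorm b :=
  Real.sum_mul_le_sqrt_mul_sqrt _ a b

lemma frob_sq {p n : ℕ} (Y : Fin p → Fin n → ℝ) :
    frob Y ^ 2 = ∑ i, ∑ j, Y i j ^ 2 :=
  Real.sq_sqrt (Finset.sum_nonneg fun _ _ => Finset.sum_nonneg fun _ _ => sq_nonneg _)

/-- If `‖X_{k,·}‖₂ ≤ γν_k` for every row `k`, then `U = 0` is a global minimizer of the sparse
convex clustering objective, i.e. `f(U) ≥ f(0) = (1/2)‖X‖_F²` for all `U`. -/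
theorem stmt15 {p n : ℕ} {ι : Type*} (E : Finset ι) (lam γ : ℝ)
    (hlam : 0 ≤ lam) (hγ : 0 < γ)
    (ω : ι → ℝ) (hω : ∀ l ∈ E, 0 ≤ ω l) (c : ι → Fin n → ℝ)
    (ν : Fin p → ℝ) (hν : ∀ k, 0 < ν k)
    (X : Fin p → Fin n → ℝ) (hX : ∀ k, vecEnorm (X k) ≤ γ * ν k) :
    let f : (Fin p → Fin n → ℝ) → ℝ := fun U =>
      (1 / 2) * frob (X - U) ^ 2
        + lam * ∑ l ∈ E, ω l * vecEnorm (mulVecF U (c l))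
        + γ * ∑ k, ν k * vecEnorm (U k)
    (∀ U, f 0 ≤ f U) ∧ f 0 = (1 / 2) * frob X ^ 2 := by
  intro f
  have hf0 : f 0 = (1 / 2) * frob X ^ 2 := by
    simp [f, vecEnorm, mulVecF]
  refine ⟨?_, hf0⟩
  intro U
  rw [hf0]
  have hexp : frob (X - U) ^ 2
      = ∑ i, ∑ j, X i j ^ 2 - 2 * ∑ i, ∑ j, X i j * U i j + ∑ i, ∑ j, U i j ^ 2 := by
    rw [frob_sq]
    simp only [Pi.sub_apply, sub_sq]
    rw [Finset.sum_comm (f := fun i j => X i j ^ 2 - 2 * X i j * U i j + U i j ^ 2)]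
    simp only [Finset.sum_add_distrib, Finset.sum_sub_distrib, Finset.mul_sum]
    rw [Finset.sum_comm (f := fun j i => X i j ^ 2),
      Finset.sum_comm (f := fun j i => 2 * X i j * U i j),
      Finset.sum_comm (f := fun j i => U i j ^ 2)]
    ring_nf
  have hS : ∑ i, ∑ j, X i j * U i j ≤ γ * ∑ k, ν k * vecEnorm (U k) := by
    rw [Finset.mul_sum]
    refine Finset.sum_le_sum fun k _ => ?_
    calc ∑ j, X k j * U k j ≤ vecEnorm (X k) * vecEnorm (U k) := cs _ _
      _ ≤ (γ * ν k) * vecEnorm (U k) :=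
        mul_le_mul_of_nonneg_right (hX k) (enorm_nonneg' _)
      _ = γ * (ν k * vecEnorm (U k)) := by ring
  have hL : 0 ≤ lam * ∑ l ∈ E, ω l * vecEnorm (mulVecF U (c l)) :=
    mul_nonneg hlam (Finset.sum_nonneg fun l hl =>
      mul_nonneg (hω l hl) (enorm_nonneg' _))
  have hQ : 0 ≤ ∑ i, ∑ j, U i j ^ 2 :=
    Finset.sum_nonneg fun _ _ => Finset.sum_nonneg fun _ _ => sq_nonneg _
  have hXsq : frob X ^ 2 = ∑ i, ∑ j, X i j ^ 2 := frob_sq X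
  simp only [f, hexp, hXsq]
  linarith
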